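/- Let α ≥ 2 be an integer, τ ∈ (0,1], and ν > 0 with ν² ≥ 2/3. Assume that α − 1 ≤ (2/3)·ν²·ln(1/(τα(1+ν²))). Then (1/(α−1))·ln( 1 + τ²·C(α,2)·min{ 4(e^{1/ν²} − 1), 2e^{1/ν²} } + Σ_{j=3}^{α} τ^j·C(α,j)·2·e^{j(j−1)/(2ν²)} ) ≤ 3.5·α·τ²/ν². (This is the quantitative core of the claim that a Gaussian mechanism with noise level ν applied to a uniformly subsampled dataset with sampling ratio τ satisfies (α, 3.5τ²α/ν²)-Rényi differential privacy.) -/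

import Mathlib

lemma exp_le_chord {a b s : ℝ} (hab : a < b) (h1 : a ≤ s) (h2 : s ≤ b) :
    Real.exp s ≤ ((b - s) * Real.exp a + (s - a) * Real.exp b) / (b - a) := by
  have hba : (0:ℝ) < b - a := by linarith
  have h := convexOn_exp.2 (Set.mem_univ a) (Set.mem_univ b)
    (show (0:ℝ) ≤ (b - s)/(b-a) from div_nonneg (by linarith) hba.le)
    (show (0:ℝ) ≤ (s - a)/(b-a) from div_nonneg (by linarith) hba.le)
    (show (b - s)/(b-a) + (s - a)/(b-a) = 1 by field_simp; ring)
  simp only [smul_eq_mul] at h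
  have hs : (b - s)/(b-a) * a + (s-a)/(b-a) * b = s := by field_simp; ring
  rw [hs] at h
  refine h.trans_eq ?_
  field_simp

lemma exp_07 : Real.exp 0.7 ≤ 2.05 := by
  have h1 : Real.exp 1 < 2.7182818286 := Real.exp_one_lt_d9
  have h7 : Real.exp 7 = Real.exp 1 ^ 7 := by rw [← Real.exp_nat_mul]; norm_num
  have h10 : Real.exp 0.7 ^ 10 = Real.exp 7 := by rw [← Real.exp_nat_mul]; norm_num
  have hlt : Real.exp 0.7 ^ 10 < 2.05 ^ 10 := by
    rw [h10, h7]
    calc Real.exp 1 ^ 7 < 2.7182818286 ^ 7 :=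
          pow_lt_pow_left₀ h1 (Real.exp_pos 1).le (by norm_num)
    _ < 2.05 ^ 10 := by norm_num
  exact (lt_of_pow_lt_pow_left₀ 10 (by norm_num) hlt).le

lemma exp_15 : Real.exp 1.5 ≤ 4.5 := by
  have h1 : Real.exp 1 < 2.7182818286 := Real.exp_one_lt_d9
  have h3 : Real.exp 3 = Real.exp 1 ^ 3 := by rw [← Real.exp_nat_mul]; norm_num
  have h2 : Real.exp 1.5 ^ 2 = Real.exp 3 := by rw [← Real.exp_nat_mul]; norm_num
  have hlt : Real.exp 1.5 ^ 2 < 4.5 ^ 2 := by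
    rw [h2, h3]
    calc Real.exp 1 ^ 3 < 2.7182818286 ^ 3 :=
          pow_lt_pow_left₀ h1 (Real.exp_pos 1).le (by norm_num)
    _ < 4.5 ^ 2 := by norm_num
  exact (lt_of_pow_lt_pow_left₀ 2 (by norm_num) hlt).le

lemma min_le_six {s : ℝ} (hs0 : 0 < s) (hs : s ≤ 3/2) :
    min (4 * (Real.exp s - 1)) (2 * Real.exp s) ≤ 6 * s := by
  rcases le_or_gt s 0.7 with h | h
  · refine (min_le_left _ _).trans ?_
    have hc := exp_le_chord (show (0:ℝ) < 0.7 by norm_num) hs0.le h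
    have := exp_07
    rw [Real.exp_zero] at hc
    have : Real.exp s ≤ 1 + 1.5 * s := by
      refine hc.trans ?_
      rw [div_le_iff₀ (by norm_num)]
      nlinarith [exp_07]
    linarith
  · refine (min_le_right _ _).trans ?_
    have hs' : s ≤ 1.5 := by rw [show (1.5:ℝ) = 3/2 by norm_num]; exact hs
    have hc := exp_le_chord (show (0.7:ℝ) < 1.5 by norm_num) h.le hs'
    have : Real.exp s ≤ 3 * s := by
      refine hc.trans ?_
      rw [div_le_iff₀ (by norm_num)]
      nlinarith [exp_07, exp_15, Real.exp_pos (0.7:ℝ), Real.exp_pos (1.5:ℝ)]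
    linarith

lemma fact_ge (i : ℕ) : 24 * 5 ^ i ≤ (4 + i).factorial := by
  induction i with
  | zero => simp [Nat.factorial]
  | succ n ih =>
    have h : (4 + (n+1)).factorial = (5 + n) * (4 + n).factorial := by
      rw [show 4 + (n+1) = (4 + n) + 1 by omega, Nat.factorial_succ]; ring_nf
    rw [h]
    calc 24 * 5 ^ (n+1) = 5 * (24 * 5 ^ n) := by ring
    _ ≤ 5 * (4+n).factorial := Nat.mul_le_mul_left _ ih
    _ ≤ (5 + n) * (4+n).factorial := Nat.mul_le_mul_right _ (by omega)

set_option maxHeartbeats 1000000 in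
open Finset in
/-- Quantitative core of the RDP bound for the Gaussian mechanism with
uniform subsampling: under the stated conditions on `α`, `τ`, `ν`,
the Rényi divergence bound is at most `3.5·α·τ²/ν²`. -/
theorem rdp_uniform_subsampling_bound (α : ℕ) (hα : 2 ≤ α) (τ ν : ℝ)
    (hτ0 : 0 < τ) (hτ1 : τ ≤ 1) (hν0 : 0 < ν) (hν : 2 / 3 ≤ ν ^ 2)
    (hcond : (α : ℝ) - 1 ≤ 2 / 3 * ν ^ 2 * Real.log (1 / (τ * α * (1 + ν ^ 2)))) :
    (1 / ((α : ℝ) - 1)) * Real.log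
      (1 + τ ^ 2 * (α.choose 2 : ℝ) *
          min (4 * (Real.exp (1 / ν ^ 2) - 1)) (2 * Real.exp (1 / ν ^ 2))
        + ∑ j ∈ Icc 3 α, τ ^ j * (α.choose j : ℝ) * 2 *
            Real.exp ((j : ℝ) * ((j : ℝ) - 1) / (2 * ν ^ 2)))
      ≤ 3.5 * α * τ ^ 2 / ν ^ 2 := by
  have hx0 : (0:ℝ) < ν ^ 2 := by positivity
  have hα2 : (2:ℝ) ≤ (α:ℝ) := by exact_mod_cast hα
  have hα1 : (0:ℝ) < (α:ℝ) - 1 := by linarith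
  set T2 : ℝ := τ ^ 2 * (α.choose 2 : ℝ) *
      min (4 * (Real.exp (1 / ν ^ 2) - 1)) (2 * Real.exp (1 / ν ^ 2)) with hT2def
  set S : ℝ := ∑ j ∈ Icc 3 α, τ ^ j * (α.choose j : ℝ) * 2 *
      Real.exp ((j : ℝ) * ((j : ℝ) - 1) / (2 * ν ^ 2)) with hSdef
  -- nonnegativity of the min
  have hmin0 : 0 ≤ min (4 * (Real.exp (1 / ν ^ 2) - 1)) (2 * Real.exp (1 / ν ^ 2)) := by
    apply le_min
    · have : (1:ℝ) ≤ Real.exp (1 / ν ^ 2) := Real.one_le_exp (by positivity)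
      linarith
    · positivity
  -- Step A: min ≤ 6/ν²
  have hmin : min (4 * (Real.exp (1 / ν ^ 2) - 1)) (2 * Real.exp (1 / ν ^ 2)) ≤ 6 / ν ^ 2 := by
    have h := min_le_six (s := 1 / ν ^ 2) (by positivity)
      (by rw [div_le_iff₀ hx0]; linarith)
    calc _ ≤ 6 * (1 / ν ^ 2) := h
    _ = 6 / ν ^ 2 := by ring
  -- Step B: first term
  have hB2 : T2 ≤ 3 * ((α:ℝ) * ((α:ℝ) - 1) * τ ^ 2 / ν ^ 2) := by
    rw [hT2def, Nat.cast_choose_two]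
    calc τ ^ 2 * ((α:ℝ) * ((α:ℝ) - 1) / 2) *
          min (4 * (Real.exp (1 / ν ^ 2) - 1)) (2 * Real.exp (1 / ν ^ 2))
        ≤ τ ^ 2 * ((α:ℝ) * ((α:ℝ) - 1) / 2) * (6 / ν ^ 2) := by
          apply mul_le_mul_of_nonneg_left hmin
          have : (0:ℝ) ≤ (α:ℝ) * ((α:ℝ) - 1) := by nlinarith
          positivity
    _ = 3 * ((α:ℝ) * ((α:ℝ) - 1) * τ ^ 2 / ν ^ 2) := by ring
  -- Step C: the sum
  have hBS : S ≤ 1/2 * ((α:ℝ) * ((α:ℝ) - 1) * τ ^ 2 / ν ^ 2) := by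
    rcases Nat.lt_or_ge α 3 with h3 | h3
    · rw [hSdef, Finset.Icc_eq_empty (by omega)]
      simp only [Finset.sum_empty]
      have : (0:ℝ) ≤ (α:ℝ) * ((α:ℝ) - 1) := by nlinarith
      positivity
    · have hα3 : (3:ℝ) ≤ (α:ℝ) := by exact_mod_cast h3
      have hB0 : (0:ℝ) < τ * (α:ℝ) * (1 + ν ^ 2) := by positivity
      have hL0 : 0 < Real.log (1 / (τ * (α:ℝ) * (1 + ν ^ 2))) := by
        by_contra h
        push_neg at h
        have h2 : 2 / 3 * ν ^ 2 * Real.log (1 / (τ * (α:ℝ) * (1 + ν ^ 2))) ≤ 0 :=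
          mul_nonpos_of_nonneg_of_nonpos (by positivity) h
        linarith
      set L : ℝ := Real.log (1 / (τ * (α:ℝ) * (1 + ν ^ 2))) with hLdef
      set y : ℝ := Real.exp (L / 3) with hydef
      have hy0 : 0 < y := Real.exp_pos _
      have hy1 : 1 ≤ y := Real.one_le_exp (by positivity)
      have hy3 : y ^ 3 = 1 / (τ * (α:ℝ) * (1 + ν ^ 2)) := by
        rw [hydef, ← Real.exp_nat_mul]
        rw [show ((3:ℕ):ℝ) * (L / 3) = L by push_cast; ring]
        exact Real.exp_log (by positivity)
      have hτα : τ * (α:ℝ) = (1 / (1 + ν ^ 2)) / y ^ 3 := by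
        rw [hy3]
        field_simp
      -- per-term bound
      have key : ∀ j ∈ Icc 3 α, τ ^ j * (α.choose j : ℝ) * 2 *
            Real.exp ((j : ℝ) * ((j : ℝ) - 1) / (2 * ν ^ 2))
          ≤ 2 * (τ * (α:ℝ)) ^ 2 * (1 / (1 + ν ^ 2)) ^ (j - 2) / (j.factorial : ℝ) := by
        intro j hj
        obtain ⟨hj3, hjα⟩ := Finset.mem_Icc.mp hj
        have hj0 : (0:ℝ) ≤ (j:ℝ) := Nat.cast_nonneg j
        have hexp : Real.exp ((j : ℝ) * ((j : ℝ) - 1) / (2 * ν ^ 2)) ≤ y ^ j := by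
          have hjα' : ((j:ℝ) - 1) ≤ (α:ℝ) - 1 := by
            have : (j:ℝ) ≤ (α:ℝ) := Nat.cast_le.mpr hjα
            linarith
          have h1 : ((j:ℝ) - 1) / (2 * ν ^ 2) ≤ L / 3 := by
            rw [div_le_div_iff₀ (by positivity) (by norm_num)]
            nlinarith [hcond]
          calc Real.exp ((j : ℝ) * ((j : ℝ) - 1) / (2 * ν ^ 2))
              ≤ Real.exp ((j:ℝ) * (L / 3)) := by
                apply Real.exp_le_exp.mpr
                rw [mul_div_assoc]
                exact mul_le_mul_of_nonneg_left h1 hj0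
          _ = y ^ j := by rw [hydef, ← Real.exp_nat_mul]
        have hchoose : (α.choose j : ℝ) ≤ (α:ℝ) ^ j / (j.factorial : ℝ) := by
          have := Nat.choose_le_pow_div (α := ℝ) j α
          simpa using this
        have step1 : τ ^ j * (α.choose j : ℝ) * 2 *
              Real.exp ((j : ℝ) * ((j : ℝ) - 1) / (2 * ν ^ 2))
            ≤ τ ^ j * ((α:ℝ) ^ j / (j.factorial : ℝ)) * 2 * y ^ j := by
          gcongr
        have step2 : τ ^ j * ((α:ℝ) ^ j / (j.factorial : ℝ)) * 2 * y ^ j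
            = 2 * ((τ * (α:ℝ)) ^ j * y ^ j) / (j.factorial : ℝ) := by
          rw [mul_pow]; ring
        have hkey : (τ * (α:ℝ)) ^ (j - 2) * y ^ j ≤ (1 / (1 + ν ^ 2)) ^ (j - 2) := by
          rw [hτα, div_pow, div_mul_eq_mul_div, div_le_iff₀ (by positivity)]
          apply mul_le_mul_of_nonneg_left _ (by positivity)
          rw [← pow_mul]
          exact pow_le_pow_right₀ hy1 (by omega)
        have step3 : (τ * (α:ℝ)) ^ j * y ^ j ≤ (τ * (α:ℝ)) ^ 2 * (1 / (1 + ν ^ 2)) ^ (j - 2) := by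
          have hsplit : (τ * (α:ℝ)) ^ j = (τ * (α:ℝ)) ^ 2 * (τ * (α:ℝ)) ^ (j - 2) := by
            rw [← pow_add]; congr 1; omega
          rw [hsplit, mul_assoc]
          exact mul_le_mul_of_nonneg_left hkey (by positivity)
        calc τ ^ j * (α.choose j : ℝ) * 2 *
              Real.exp ((j : ℝ) * ((j : ℝ) - 1) / (2 * ν ^ 2))
            ≤ τ ^ j * ((α:ℝ) ^ j / (j.factorial : ℝ)) * 2 * y ^ j := step1
        _ = 2 * ((τ * (α:ℝ)) ^ j * y ^ j) / (j.factorial : ℝ) := step2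
        _ ≤ 2 * ((τ * (α:ℝ)) ^ 2 * (1 / (1 + ν ^ 2)) ^ (j - 2)) / (j.factorial : ℝ) := by
            gcongr
        _ = 2 * (τ * (α:ℝ)) ^ 2 * (1 / (1 + ν ^ 2)) ^ (j - 2) / (j.factorial : ℝ) := by ring
      have hu0 : (0:ℝ) < 1/(1+ν^2) := by positivity
      have huu : 1/(1+ν^2) ≤ 3/5 := by
        rw [div_le_div_iff₀ (by positivity) (by norm_num)]
        linarith
      have hu_le1 : 1/(1+ν^2) ≤ (1:ℝ) := by
        rw [div_le_one (by positivity)]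
        linarith
      have hux : (1/(1+ν^2)) * ν^2 = 1 - 1/(1+ν^2) := by
        field_simp
        ring
      have hstep : S ≤ ∑ j ∈ Icc 3 α,
          2 * (τ * (α:ℝ)) ^ 2 * (1/(1+ν^2)) ^ (j - 2) / (j.factorial : ℝ) := by
        rw [hSdef]
        exact Finset.sum_le_sum key
      have hre : ∑ j ∈ Icc 3 α,
          2 * (τ * (α:ℝ)) ^ 2 * (1/(1+ν^2)) ^ (j - 2) / (j.factorial : ℝ)
          = (∑ i ∈ range (α - 3),
              2 * (τ * (α:ℝ)) ^ 2 * (1/(1+ν^2)) ^ ((3 + (i+1)) - 2) / (((3 + (i+1)).factorial : ℝ)))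
            + 2 * (τ * (α:ℝ)) ^ 2 * (1/(1+ν^2)) ^ ((3 + 0) - 2) / (((3 + 0).factorial : ℝ)) := by
        rw [← Finset.Ico_add_one_right_eq_Icc, Finset.sum_Ico_eq_sum_range,
          show α + 1 - 3 = (α - 3) + 1 by omega, Finset.sum_range_succ']
      have hf0 : 2 * (τ * (α:ℝ)) ^ 2 * (1/(1+ν^2)) ^ ((3 + 0) - 2) / (((3 + 0).factorial : ℝ))
          = (τ * (α:ℝ)) ^ 2 * (1/(1+ν^2)) / 3 := by
        norm_num [Nat.factorial]
        ring
      have htail : ∀ i ∈ range (α - 3),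
          2 * (τ * (α:ℝ)) ^ 2 * (1/(1+ν^2)) ^ ((3 + (i+1)) - 2) / (((3 + (i+1)).factorial : ℝ))
          ≤ (τ * (α:ℝ)) ^ 2 * (1/(1+ν^2)) ^ 2 / 12 * ((3:ℝ)/25) ^ i := by
        intro i _
        have hfac : (24 * 5 ^ i : ℝ) ≤ (((3 + (i+1)).factorial : ℝ)) := by
          rw [show 3 + (i+1) = 4 + i by omega]
          exact_mod_cast fact_ge i
        have hpow : (1/(1+ν^2)) ^ ((3 + (i+1)) - 2) ≤ (1/(1+ν^2))^2 * ((3:ℝ)/5) ^ i := by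
          rw [show (3 + (i+1)) - 2 = 2 + i by omega, pow_add]
          exact mul_le_mul_of_nonneg_left (pow_le_pow_left₀ hu0.le huu i) (by positivity)
        calc 2 * (τ * (α:ℝ)) ^ 2 * (1/(1+ν^2)) ^ ((3 + (i+1)) - 2) / (((3 + (i+1)).factorial : ℝ))
            ≤ 2 * (τ * (α:ℝ)) ^ 2 * ((1/(1+ν^2))^2 * ((3:ℝ)/5) ^ i) / ((24 * 5 ^ i : ℝ)) :=
              div_le_div₀ (by positivity)
                (mul_le_mul_of_nonneg_left hpow (by positivity)) (by positivity) hfac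
        _ = (τ * (α:ℝ)) ^ 2 * (1/(1+ν^2)) ^ 2 / 12 * ((3:ℝ)/25) ^ i := by
              rw [show ((3:ℝ)/25) = (3/5) * (1/5) by norm_num, mul_pow, one_div, inv_pow]
              have h5 : ((5:ℝ))^i ≠ 0 := by positivity
              field_simp
              ring_nf
              rw [← mul_pow]; norm_num
      have hgeo : ∑ i ∈ range (α - 3), ((3:ℝ)/25) ^ i ≤ 25/22 := by
        rw [geom_sum_eq (by norm_num)]
        have h1 : (0:ℝ) ≤ ((3:ℝ)/25) ^ (α - 3) := by positivity
        rw [div_le_iff_of_neg (by norm_num : (3:ℝ)/25 - 1 < 0)]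
        nlinarith
      have htail2 : ∑ i ∈ range (α - 3),
            2 * (τ * (α:ℝ)) ^ 2 * (1/(1+ν^2)) ^ ((3 + (i+1)) - 2) / (((3 + (i+1)).factorial : ℝ))
          ≤ (τ * (α:ℝ)) ^ 2 * (1/(1+ν^2)) ^ 2 / 12 * (25/22) := by
        calc ∑ i ∈ range (α - 3),
              2 * (τ * (α:ℝ)) ^ 2 * (1/(1+ν^2)) ^ ((3 + (i+1)) - 2) / (((3 + (i+1)).factorial : ℝ))
            ≤ ∑ i ∈ range (α - 3),
              (τ * (α:ℝ)) ^ 2 * (1/(1+ν^2)) ^ 2 / 12 * ((3:ℝ)/25) ^ i := Finset.sum_le_sum htail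
        _ = (τ * (α:ℝ)) ^ 2 * (1/(1+ν^2)) ^ 2 / 12 * ∑ i ∈ range (α - 3), ((3:ℝ)/25) ^ i := by
              rw [← Finset.mul_sum]
        _ ≤ (τ * (α:ℝ)) ^ 2 * (1/(1+ν^2)) ^ 2 / 12 * (25/22) :=
              mul_le_mul_of_nonneg_left hgeo (by positivity)
      have hE : S ≤ (τ * (α:ℝ)) ^ 2 * (1/(1+ν^2)) / 3
          + (τ * (α:ℝ)) ^ 2 * (1/(1+ν^2)) ^ 2 * (25/264) := by
        have := hstep
        rw [hre, hf0] at this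
        have h12 : (τ * (α:ℝ)) ^ 2 * (1/(1+ν^2)) ^ 2 / 12 * (25/22)
            = (τ * (α:ℝ)) ^ 2 * (1/(1+ν^2)) ^ 2 * (25/264) := by ring
        linarith [htail2, h12.le, h12.ge]
      rw [show (1:ℝ)/2 * ((α:ℝ) * ((α:ℝ) - 1) * τ ^ 2 / ν ^ 2)
          = ((1:ℝ)/2 * ((α:ℝ) * ((α:ℝ) - 1) * τ ^ 2)) / ν ^ 2 by ring,
        le_div_iff₀ hx0]
      have hcoef : (1 - 1/(1+ν^2))/3 + (1 - 1/(1+ν^2)) * (1/(1+ν^2)) * (25/264) ≤ 1/3 := by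
        nlinarith [hu0, hu_le1]
      calc S * ν^2 ≤ ((τ * (α:ℝ)) ^ 2 * (1/(1+ν^2)) / 3
            + (τ * (α:ℝ)) ^ 2 * (1/(1+ν^2)) ^ 2 * (25/264)) * ν^2 :=
            mul_le_mul_of_nonneg_right hE hx0.le
      _ = (τ * (α:ℝ)) ^ 2 * ((1 - 1/(1+ν^2))/3 + (1 - 1/(1+ν^2)) * (1/(1+ν^2)) * (25/264)) := by
            linear_combination ((τ * (α:ℝ))^2/3 + (τ * (α:ℝ))^2 * (1/(1+ν^2)) * (25/264)) * hux
      _ ≤ (τ * (α:ℝ)) ^ 2 * (1/3) := mul_le_mul_of_nonneg_left hcoef (by positivity)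
      _ ≤ 1/2 * ((α:ℝ) * ((α:ℝ) - 1) * τ ^ 2) := by
            nlinarith [mul_nonneg (mul_nonneg (sq_nonneg τ) (by linarith : (0:ℝ) ≤ (α:ℝ)))
              (by linarith : (0:ℝ) ≤ (α:ℝ) - 3)]
  -- Step D: combine
  have hX0 : 0 ≤ T2 + S := by
    have h1 : 0 ≤ T2 := by
      rw [hT2def]; positivity
    have h2 : 0 ≤ S := by
      rw [hSdef]
      apply Finset.sum_nonneg
      intro j hj
      positivity
    linarith
  have hlog : Real.log (1 + T2 + S) ≤ T2 + S := by
    have := Real.log_le_sub_one_of_pos (show (0:ℝ) < 1 + T2 + S by linarith)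
    linarith
  have hbound : T2 + S ≤ 3.5 * ((α:ℝ) * ((α:ℝ) - 1) * τ ^ 2 / ν ^ 2) := by linarith
  calc (1 / ((α : ℝ) - 1)) * Real.log (1 + T2 + S)
      ≤ (1 / ((α : ℝ) - 1)) * (3.5 * ((α:ℝ) * ((α:ℝ) - 1) * τ ^ 2 / ν ^ 2)) := by
        apply mul_le_mul_of_nonneg_left (hlog.trans hbound) (by positivity)
  _ = 3.5 * (α:ℝ) * τ ^ 2 / ν ^ 2 := by
      field_simp
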